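/- Let n be a positive integer with n ≡ 2 (mod 3). Then, modulo Phi_n(q)^2, 1 + [2n]^2 (2 - q^{2n}) * sum_{j=1}^{(2n-1)/3} ( q^{3j-1}/[3j-1]^2 - q^{3j}/[3j]^2 ) ≡ 5. -/

import Mathlib

open Finset

/-- The generator `q` of the field `ℚ(q)` of rational functions. -/
noncomputable def q : RatFunc ℚ := RatFunc.X

/-- The `q`-integer `[r] = (1 - q^r)/(1 - q)`. -/
noncomputable def qint (r : ℤ) : RatFunc ℚ := (1 - q ^ r) / (1 - q)

/-- The `q`-shifted factorial `(x; b)_m = (1-x)(1-xb)⋯(1-x b^(m-1))`. -/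
noncomputable def qpoch (x b : RatFunc ℚ) (m : ℕ) : RatFunc ℚ :=
  ∏ i ∈ Finset.range m, (1 - x * b ^ i)

/-- `f ≡ g (mod P)`: `f - g = P * (r/s)` with `s` coprime to `P`. -/
def qcong (f g : RatFunc ℚ) (P : Polynomial ℚ) : Prop :=
  ∃ r s : Polynomial ℚ, IsCoprime s P ∧
    f - g = algebraMap (Polynomial ℚ) (RatFunc ℚ) P *
      (algebraMap (Polynomial ℚ) (RatFunc ℚ) r / algebraMap (Polynomial ℚ) (RatFunc ℚ) s)

noncomputable def aM : Polynomial ℚ →+* RatFunc ℚ := algebraMap _ _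

lemma aM_ne_zero {p : Polynomial ℚ} (h : p ≠ 0) : aM p ≠ 0 := by
  simpa [aM] using (map_ne_zero_iff _ (RatFunc.algebraMap_injective ℚ)).2 h

lemma q_eq_aM_X : q = aM Polynomial.X := (RatFunc.algebraMap_X (K := ℚ)).symm

lemma q_pow_eq (m : ℕ) : q ^ m = aM (Polynomial.X ^ m) := by
  rw [map_pow, ← q_eq_aM_X]

lemma one_sub_q_pow_ne (m : ℕ) (hm : 1 ≤ m) : (1 : RatFunc ℚ) - q ^ m ≠ 0 := by
  rw [q_pow_eq, ← map_one aM, ← map_sub]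
  apply aM_ne_zero
  intro h
  have h2 := congrArg (fun p => Polynomial.coeff p m) h
  simp only [Polynomial.coeff_sub, Polynomial.coeff_one, Polynomial.coeff_X_pow,
    Polynomial.coeff_zero] at h2
  rw [if_neg (by omega : ¬ m = 0)] at h2
  norm_num at h2

lemma one_sub_q_ne : (1 : RatFunc ℚ) - q ≠ 0 := by
  simpa using one_sub_q_pow_ne 1 le_rfl

def Good (P : Polynomial ℚ) (f : RatFunc ℚ) : Prop :=
  ∃ r s : Polynomial ℚ, IsCoprime s P ∧ f = aM r / aM s

lemma good_poly (P : Polynomial ℚ) (r : Polynomial ℚ) : Good P (aM r) :=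
  ⟨r, 1, isCoprime_one_left, by simp⟩

lemma good_ne_zero {P : Polynomial ℚ} (hP : ¬ IsUnit P) {s : Polynomial ℚ}
    (h : IsCoprime s P) : s ≠ 0 := by
  rintro rfl
  exact hP (isCoprime_zero_left.mp h)

lemma Good.add {P : Polynomial ℚ} (hP : ¬ IsUnit P) {f g : RatFunc ℚ}
    (hf : Good P f) (hg : Good P g) : Good P (f + g) := by
  obtain ⟨r₁, s₁, hc₁, rfl⟩ := hf
  obtain ⟨r₂, s₂, hc₂, rfl⟩ := hg
  refine ⟨r₁ * s₂ + r₂ * s₁, s₁ * s₂, (hc₁.mul_left hc₂), ?_⟩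
  have h₁ := aM_ne_zero (good_ne_zero hP hc₁)
  have h₂ := aM_ne_zero (good_ne_zero hP hc₂)
  field_simp
  simp only [map_mul, map_add]
  ring

lemma Good.mul {P : Polynomial ℚ} {f g : RatFunc ℚ}
    (hf : Good P f) (hg : Good P g) : Good P (f * g) := by
  obtain ⟨r₁, s₁, hc₁, rfl⟩ := hf
  obtain ⟨r₂, s₂, hc₂, rfl⟩ := hg
  exact ⟨r₁ * r₂, s₁ * s₂, hc₁.mul_left hc₂,
    by rw [div_mul_div_comm, ← map_mul, ← map_mul]⟩

lemma Good.neg {P : Polynomial ℚ} {f : RatFunc ℚ} (hf : Good P f) : Good P (-f) := by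
  obtain ⟨r, s, hc, rfl⟩ := hf
  exact ⟨-r, s, hc, by rw [map_neg, neg_div]⟩

lemma Good.sub {P : Polynomial ℚ} (hP : ¬ IsUnit P) {f g : RatFunc ℚ}
    (hf : Good P f) (hg : Good P g) : Good P (f - g) := by
  simpa [sub_eq_add_neg] using hf.add hP hg.neg

lemma Good.sum {P : Polynomial ℚ} (hP : ¬ IsUnit P) {ι : Type*} (s : Finset ι)
    (f : ι → RatFunc ℚ) (h : ∀ i ∈ s, Good P (f i)) : Good P (∑ i ∈ s, f i) := by
  classical
  induction s using Finset.induction_on with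
  | empty => simpa using good_poly P 0
  | @insert a s hx ih =>
    rw [Finset.sum_insert hx]
    exact (h _ (Finset.mem_insert_self _ _)).add hP
      (ih fun i hi => h i (Finset.mem_insert_of_mem hi))

lemma cyc_not_dvd {n m : ℕ} (hn : 0 < n) (hm : 0 < m) (h : ¬ n ∣ m) :
    ¬ Polynomial.cyclotomic n ℚ ∣ (Polynomial.X ^ m - 1) := by
  intro hdvd
  rw [← Polynomial.prod_cyclotomic_eq_X_pow_sub_one hm] at hdvd
  have hprime : Prime (Polynomial.cyclotomic n ℚ) :=
    (Polynomial.cyclotomic.irreducible_rat hn).prime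
  obtain ⟨d, hd, hdvd'⟩ := hprime.exists_mem_finset_dvd hdvd
  have hd0 : 0 < d := Nat.pos_of_mem_divisors hd
  have heq : Polynomial.cyclotomic n ℚ = Polynomial.cyclotomic d ℚ :=
    Polynomial.eq_of_monic_of_associated (Polynomial.cyclotomic.monic n ℚ)
      (Polynomial.cyclotomic.monic d ℚ)
      ((Polynomial.cyclotomic.irreducible_rat hn).associated_of_dvd
        (Polynomial.cyclotomic.irreducible_rat hd0) hdvd')
  exact h ((Polynomial.cyclotomic_injective heq) ▸ Nat.dvd_of_mem_divisors hd)

lemma not_dvd_aux {n m : ℕ} (h1 : 0 < m) (h2 : m < 2 * n) (h3 : m ≠ n) : ¬ n ∣ m := by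
  rintro ⟨k, hk⟩
  have hn : 0 < n := by omega
  have hk2 : k < 2 := by
    by_contra hc
    push_neg at hc
    have : 2 * n ≤ n * k := by
      calc 2 * n = n * 2 := by ring
      _ ≤ n * k := Nat.mul_le_mul_left n hc
    omega
  interval_cases k <;> omega

/-- the basic summand function -/
noncomputable def gg (m : ℕ) : RatFunc ℚ := q ^ m * (1 - q) ^ 2 / (1 - q ^ m) ^ 2

lemma q_zpow_div (m : ℕ) (hm : 1 ≤ m) : q ^ (m : ℤ) / qint m ^ 2 = gg m := by
  rw [zpow_natCast, qint, zpow_natCast, gg]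
  have h1 := one_sub_q_ne
  have h2 := one_sub_q_pow_ne m hm
  field_simp

theorem stmt19 (n : ℕ) (hpos : 0 < n) (hmod : n % 3 = 2) :
    qcong
      (1 + qint (2 * n) ^ 2 * (2 - q ^ (2 * n)) *
        ∑ j ∈ Finset.Icc 1 ((2 * n - 1) / 3),
          (q ^ (3 * (j : ℤ) - 1) / qint (3 * j - 1) ^ 2 -
            q ^ (3 * (j : ℤ)) / qint (3 * j) ^ 2))
      5
      (Polynomial.cyclotomic n ℚ ^ 2) := by
  classical
  set Φ : Polynomial ℚ := Polynomial.cyclotomic n ℚ with hΦdef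
  have hn2 : 2 ≤ n := by omega
  have hirr : Irreducible Φ := Polynomial.cyclotomic.irreducible_rat hpos
  have hΦu : ¬ IsUnit Φ := hirr.not_isUnit
  set N : ℕ := (2 * n - 1) / 3 with hNdef
  have hN3 : 3 * N = 2 * n - 1 := by omega
  set j₀ : ℕ := (n + 1) / 3 with hj₀def
  have hj₀3 : 3 * j₀ = n + 1 := by omega
  have hj₀mem : j₀ ∈ Finset.Icc 1 N := by
    rw [Finset.mem_Icc]
    omega
  -- coprimality of denominators with Φ
  have hcop : ∀ m : ℕ, 0 < m → m < 2 * n → m ≠ n →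
      IsCoprime ((1 - Polynomial.X ^ m) ^ 2) Φ := by
    intro m h1 h2 h3
    have hnd : ¬ Φ ∣ (1 - Polynomial.X ^ m) := by
      intro hd
      refine cyc_not_dvd hpos h1 (not_dvd_aux h1 h2 h3) ?_
      rw [show (Polynomial.X : Polynomial ℚ) ^ m - 1 = -(1 - Polynomial.X ^ m) by ring]
      exact dvd_neg.mpr hd
    exact ((hirr.coprime_iff_not_dvd.mpr hnd).symm).pow_left
  -- the w function and its goodness
  set w : ℕ → RatFunc ℚ := fun m => (2 - q ^ (2 * n)) * q ^ m / (1 - q ^ m) ^ 2 with hwdef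
  have hwgood : ∀ m : ℕ, 0 < m → m < 2 * n → m ≠ n → Good Φ (w m) := by
    intro m h1 h2 h3
    refine ⟨(2 - Polynomial.X ^ (2 * n)) * Polynomial.X ^ m, (1 - Polynomial.X ^ m) ^ 2,
      hcop m h1 h2 h3, ?_⟩
    simp only [hwdef, map_mul, map_sub, map_pow, map_ofNat, ← q_eq_aM_X, map_one]
  -- rewrite the sum in terms of gg
  have hsum : ∑ j ∈ Finset.Icc 1 N,
      (q ^ (3 * (j : ℤ) - 1) / qint (3 * j - 1) ^ 2 -
        q ^ (3 * (j : ℤ)) / qint (3 * j) ^ 2) =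
      ∑ j ∈ Finset.Icc 1 N, (gg (3 * j - 1) - gg (3 * j)) := by
    refine Finset.sum_congr rfl fun j hj => ?_
    have hj1 : 1 ≤ j := (Finset.mem_Icc.mp hj).1
    have e1 : 3 * (j : ℤ) - 1 = ((3 * j - 1 : ℕ) : ℤ) := by push_cast; omega
    have e2 : 3 * (j : ℤ) = ((3 * j : ℕ) : ℤ) := by push_cast; ring
    rw [e1, e2, q_zpow_div _ (by omega), q_zpow_div _ (by omega)]
  -- q^n - 1 and q^(2n) - 1 factorizations
  obtain ⟨D₀, hD₀⟩ : Φ ∣ (Polynomial.X ^ n - 1) := Polynomial.cyclotomic.dvd_X_pow_sub_one n ℚ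
  have hD₁ : (Polynomial.X : Polynomial ℚ) ^ (2 * n) - 1 = Φ * (D₀ * (Polynomial.X ^ n + 1)) := by
    have : (Polynomial.X : Polynomial ℚ) ^ (2 * n) - 1 =
        (Polynomial.X ^ n - 1) * (Polynomial.X ^ n + 1) := by
      rw [two_mul, pow_add]; ring
    rw [this, hD₀, mul_assoc]
  set D₁ : Polynomial ℚ := D₀ * (Polynomial.X ^ n + 1) with hD₁def
  have hqn : q ^ n - 1 = aM Φ * aM D₀ := by
    rw [q_pow_eq, ← map_one aM, ← map_sub, hD₀, map_mul]
  have hq2n : q ^ (2 * n) - 1 = aM Φ * aM D₁ := by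
    rw [q_pow_eq, ← map_one aM, ← map_sub, hD₁, map_mul]
  -- T
  set T : RatFunc ℚ := qint (2 * n) ^ 2 * (2 - q ^ (2 * n)) with hTdef
  have hT : T = ((1 - q ^ (2 * n)) / (1 - q)) ^ 2 * (2 - q ^ (2 * n)) := by
    rw [hTdef, qint]
    congr 2
  have h1q := one_sub_q_ne
  have hqnne := one_sub_q_pow_ne n (by omega)
  -- main local identity for the special term
  have h₁ : T * gg n - 4 = (aM Φ) ^ 2 *
      ((aM D₀) ^ 2 * (-q ^ (3 * n) - 4 * q ^ (2 * n) - 6 * q ^ n - 4)) := by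
    have e2 : q ^ (2 * n) = (q ^ n) ^ 2 := by rw [mul_comm, pow_mul]
    have e3 : q ^ (3 * n) = (q ^ n) ^ 3 := by rw [mul_comm, pow_mul]
    have key : T * gg n - 4 = (1 - q ^ n) ^ 2 *
        (-q ^ (3 * n) - 4 * q ^ (2 * n) - 6 * q ^ n - 4) := by
      rw [hT, gg, e2, e3]
      field_simp
      ring
    rw [key, show (1 - q ^ n) ^ 2 = (q ^ n - 1) ^ 2 by ring, hqn, mul_pow, mul_assoc]
  -- identity for all other terms
  have h₂ : ∀ m : ℕ, 1 ≤ m → T * gg m = (aM Φ) ^ 2 * ((aM D₁) ^ 2 * w m) := by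
    intro m hm
    have hmne := one_sub_q_pow_ne m hm
    have key : T * gg m = (1 - q ^ (2 * n)) ^ 2 * w m := by
      rw [hT, gg, hwdef]
      field_simp
    rw [key, show (1 - q ^ (2 * n)) ^ 2 = (q ^ (2 * n) - 1) ^ 2 by ring, hq2n, mul_pow, mul_assoc]
  -- split off j₀
  set E : Finset ℕ := (Finset.Icc 1 N).erase j₀ with hEdef
  have hsplit : ∑ j ∈ Finset.Icc 1 N, (gg (3 * j - 1) - gg (3 * j)) =
      (gg n - gg (n + 1)) + ∑ j ∈ E, (gg (3 * j - 1) - gg (3 * j)) := by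
    rw [← Finset.add_sum_erase _ _ hj₀mem, show 3 * j₀ - 1 = n by omega, hj₀3]
  -- define U
  set U : RatFunc ℚ := (aM D₀) ^ 2 * (-q ^ (3 * n) - 4 * q ^ (2 * n) - 6 * q ^ n - 4) +
      ((∑ j ∈ E, ((aM D₁) ^ 2 * w (3 * j - 1) - (aM D₁) ^ 2 * w (3 * j))) -
        (aM D₁) ^ 2 * w (n + 1)) with hUdef
  have hEj : ∀ j ∈ E, 1 ≤ j ∧ j ≤ N ∧ j ≠ j₀ := by
    intro j hj
    rw [hEdef, Finset.mem_erase, Finset.mem_Icc] at hj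
    exact ⟨hj.2.1, hj.2.2, hj.1⟩
  -- main equation
  have hkey : (1 + T * ∑ j ∈ Finset.Icc 1 N,
      (q ^ (3 * (j : ℤ) - 1) / qint (3 * j - 1) ^ 2 -
        q ^ (3 * (j : ℤ)) / qint (3 * j) ^ 2)) - 5 = (aM Φ) ^ 2 * U := by
    rw [hsum, hsplit]
    have expand : (1 + T * ((gg n - gg (n + 1)) +
        ∑ j ∈ E, (gg (3 * j - 1) - gg (3 * j)))) - 5 =
        (T * gg n - 4) + ((∑ j ∈ E, (T * gg (3 * j - 1) - T * gg (3 * j))) - T * gg (n + 1)) := by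
      rw [mul_add, Finset.mul_sum]
      simp only [mul_sub]
      ring
    rw [expand, h₁, h₂ (n + 1) (by omega)]
    have hsum2 : ∑ j ∈ E, (T * gg (3 * j - 1) - T * gg (3 * j)) =
        (aM Φ) ^ 2 * ∑ j ∈ E, ((aM D₁) ^ 2 * w (3 * j - 1) - (aM D₁) ^ 2 * w (3 * j)) := by
      rw [Finset.mul_sum]
      refine Finset.sum_congr rfl fun j hj => ?_
      obtain ⟨hj1, hjN, hjj₀⟩ := hEj j hj
      rw [h₂ (3 * j - 1) (by omega), h₂ (3 * j) (by omega)]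
      ring
    rw [hsum2, hUdef]
    ring
  -- U is good
  have hD₁good : Good Φ ((aM D₁) ^ 2) := by
    rw [← map_pow]
    exact good_poly _ _
  have hUgood : Good Φ U := by
    rw [hUdef]
    refine Good.add hΦu ?_ (Good.sub hΦu (Good.sum hΦu _ _ fun j hj => ?_)
      (hD₁good.mul (hwgood (n + 1) (by omega) (by omega) (by omega))))
    · have : (aM D₀) ^ 2 * (-q ^ (3 * n) - 4 * q ^ (2 * n) - 6 * q ^ n - 4) =
          aM (D₀ ^ 2 * (-Polynomial.X ^ (3 * n) - 4 * Polynomial.X ^ (2 * n) -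
            6 * Polynomial.X ^ n - 4)) := by
        simp only [map_mul, map_sub, map_pow, map_ofNat, map_neg, ← q_eq_aM_X]
      rw [this]
      exact good_poly _ _
    · obtain ⟨hj1, hjN, hjj₀⟩ := hEj j hj
      exact Good.sub hΦu
        (hD₁good.mul (hwgood (3 * j - 1) (by omega) (by omega) (by omega)))
        (hD₁good.mul (hwgood (3 * j) (by omega) (by omega) (by omega)))
  -- conclude
  obtain ⟨r, s, hc, hU⟩ := hUgood
  refine ⟨r, s, hc.pow_right, ?_⟩
  have haM : algebraMap (Polynomial ℚ) (RatFunc ℚ) = aM := rfl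
  rw [haM, map_pow, ← hU]
  exact hkey
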